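/- If f : P₁ × ⋯ × Pₙ → P' is an order-preserving, cover-stable map between dcpo presentations, then the map f̄ : P̄₁ × ⋯ × P̄ₙ → P̄' defined by f̄(X₁,…,Xₙ) = ⟨{f(x₁,…,xₙ) | xᵢ ∈ Xᵢ}⟩ is a well-defined Scott-continuous extension of f, and is the unique such extension. -/
import Mathlib


section Pres
variable {P : Type*} [Preorder P]

/-- A `C`-ideal: downward closed and closed under covers. -/
def IsCIdeal (C : P → Set P → Prop) (X : Set P) : Prop :=
  (∀ x ∈ X, ∀ y, y ≤ x → y ∈ X) ∧ ∀ x U, C x U → U ⊆ X → x ∈ X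

/-- The collection of `C`-ideals, ordered by inclusion. -/
abbrev CIdl (C : P → Set P → Prop) : Type _ := {X : Set P // IsCIdeal C X}

/-- The `C`-ideal generated by a set. -/
def genC (C : P → Set P → Prop) (S : Set P) : Set P := ⋂₀ {X | IsCIdeal C X ∧ S ⊆ X}

lemma isCIdeal_sInter (C : P → Set P → Prop) (T : Set (Set P))
    (hT : ∀ X ∈ T, IsCIdeal C X) : IsCIdeal C (⋂₀ T) := by
  refine ⟨?_, ?_⟩
  · intro x hx y hyx
    rw [Set.mem_sInter] at *
    intro X hX
    exact (hT X hX).1 x (hx X hX) y hyx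
  · intro x U hU hsub
    rw [Set.mem_sInter]
    intro X hX
    exact (hT X hX).2 x U hU fun u hu => Set.mem_sInter.mp (hsub hu) X hX

lemma isCIdeal_genC (C : P → Set P → Prop) (S : Set P) : IsCIdeal C (genC C S) :=
  isCIdeal_sInter C _ fun _ hX => hX.1

lemma subset_genC (C : P → Set P → Prop) (S : Set P) : S ⊆ genC C S :=
  fun _ hs => Set.mem_sInter.mpr fun _ hX => hX.2 hs

noncomputable instance instInfCIdl (C : P → Set P → Prop) : InfSet (CIdl C) :=
  ⟨fun S => ⟨⋂₀ (Subtype.val '' S),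
    isCIdeal_sInter C _ (by rintro X ⟨Y, _, rfl⟩; exact Y.2)⟩⟩

noncomputable instance instCompleteLatticeCIdl (C : P → Set P → Prop) :
    CompleteLattice (CIdl C) :=
  completeLatticeOfInf _ (by
    intro S
    constructor
    · intro X hX
      exact fun a ha => Set.mem_sInter.mp ha X.1 ⟨X, hX, rfl⟩
    · intro Y hY a ha
      refine Set.mem_sInter.mpr ?_
      rintro Z ⟨X, hX, rfl⟩
      exact hY hX ha)

/-- The natural map `x ↦ ⟨x⟩` from a presentation into its `C`-ideals. -/
def etaC (C : P → Set P → Prop) (x : P) : CIdl C := ⟨genC C {x}, isCIdeal_genC C _⟩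

/-- The free dcpo over a dcpo presentation: the least family of `C`-ideals containing
all principal `C`-ideals and closed under directed joins. -/
def OverC (C : P → Set P → Prop) : Set (CIdl C) :=
  ⋂₀ {Y | (∀ x, etaC C x ∈ Y) ∧
      ∀ S ⊆ Y, S.Nonempty → DirectedOn (· ≤ ·) S → sSup S ∈ Y}

end Pres

section Filt
variable {A : Type*}

/-- `F` is a filter: nonempty, upward closed, downward directed. -/
def IsFilt [Preorder A] (F : Set A) : Prop :=
  F.Nonempty ∧ (∀ a ∈ F, ∀ b, a ≤ b → b ∈ F) ∧
    ∀ a ∈ F, ∀ b ∈ F, ∃ c ∈ F, c ≤ a ∧ c ≤ b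

/-- `I` is an ideal: nonempty, downward closed, upward directed. -/
def IsIdl [Preorder A] (I : Set A) : Prop :=
  I.Nonempty ∧ (∀ a ∈ I, ∀ b, b ≤ a → b ∈ I) ∧
    ∀ a ∈ I, ∀ b ∈ I, ∃ c ∈ I, a ≤ c ∧ b ≤ c

/-- The free co-directed meet completion of `A`: filters ordered by reverse inclusion. -/
def FComp (A : Type u) [Preorder A] : Type u := {F : Set A // IsFilt F}

instance [Preorder A] : PartialOrder (FComp A) where
  le x y := y.1 ⊆ x.1
  le_refl x := subset_rfl
  le_trans x y z h1 h2 := Set.Subset.trans h2 h1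
  le_antisymm x y h1 h2 := Subtype.ext (subset_antisymm h2 h1)

/-- The embedding `↑ : A → ℱ(A)` sending `a` to the principal filter. -/
def pf [Preorder A] (a : A) : FComp A :=
  ⟨{b | a ≤ b}, ⟨a, le_refl a⟩, fun x hx b hb => le_trans hx hb,
    fun x hx y hy => ⟨a, le_refl a, hx, hy⟩⟩

noncomputable instance [Lattice A] [BoundedOrder A] : InfSet (FComp A) :=
  ⟨fun S => ⟨⋂₀ {F | IsFilt F ∧ ∀ x ∈ S, x.1 ⊆ F}, by
    refine ⟨⟨⊤, ?_⟩, ?_, ?_⟩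
    · refine Set.mem_sInter.mpr ?_
      rintro F ⟨⟨⟨w, hw⟩, hup, _⟩, _⟩
      exact hup w hw ⊤ le_top
    · intro a ha b hab
      refine Set.mem_sInter.mpr fun F hF => ?_
      exact hF.1.2.1 a (Set.mem_sInter.mp ha F hF) b hab
    · intro a ha b hb
      refine ⟨a ⊓ b, ?_, inf_le_left, inf_le_right⟩
      refine Set.mem_sInter.mpr fun F hF => ?_
      obtain ⟨c, hc, hca, hcb⟩ :=
        hF.1.2.2 a (Set.mem_sInter.mp ha F hF) b (Set.mem_sInter.mp hb F hF)
      exact hF.1.2.1 c hc (a ⊓ b) (le_inf hca hcb)⟩⟩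

noncomputable instance [Lattice A] [BoundedOrder A] : CompleteLattice (FComp A) :=
  completeLatticeOfInf _ (by
    intro S
    constructor
    · intro x hx
      show x.1 ⊆ (sInf S).1
      intro a ha
      exact Set.mem_sInter.mpr fun F hF => hF.2 x hx ha
    · intro y hY
      show (sInf S).1 ⊆ y.1
      intro a ha
      exact Set.mem_sInter.mp ha y.1 ⟨y.2, fun x hx => hY hx⟩)

/-- The lifting of a monotone map to the filter completions. -/
def liftF {ι : Type*} {A : ι → Type*} {B : Type*} [∀ i, Preorder (A i)] [Preorder B]
    (f : (∀ i, A i) → B) (hf : Monotone f) (x : ∀ i, FComp (A i)) : FComp B :=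
  ⟨{b | ∃ a : ∀ i, A i, (∀ i, a i ∈ (x i).1) ∧ f a ≤ b}, by
    refine ⟨?_, ?_, ?_⟩
    · exact ⟨f (fun i => ((x i).2.1).choose), fun i => ((x i).2.1).choose,
        fun i => ((x i).2.1).choose_spec, le_rfl⟩
    · rintro b ⟨a, ha, hab⟩ c hbc
      exact ⟨a, ha, hab.trans hbc⟩
    · rintro b ⟨a1, ha1, h1⟩ c ⟨a2, ha2, h2⟩
      choose g hg hga1 hga2 using fun i => (x i).2.2.2 (a1 i) (ha1 i) (a2 i) (ha2 i)
      exact ⟨f g, ⟨g, hg, le_rfl⟩, (hf fun i => hga1 i).trans h1,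
        (hf fun i => hga2 i).trans h2⟩⟩

/-- The co-Scott continuous extension of binary join to the filter completion. -/
def supF [Lattice A] (x y : FComp A) : FComp A :=
  liftF (A := fun _ : Fin 2 => A) (fun a => a 0 ⊔ a 1)
    (fun _ _ hab => sup_le_sup (hab 0) (hab 1)) ![x, y]

/-- The co-Scott continuous extension of binary meet to the filter completion. -/
def infF [Lattice A] (x y : FComp A) : FComp A :=
  liftF (A := fun _ : Fin 2 => A) (fun a => a 0 ⊓ a 1)
    (fun _ _ hab => inf_le_inf (hab 0) (hab 1)) ![x, y]

/-- A map is co-Scott continuous if it preserves meets of nonempty co-directed sets. -/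
def CoScottCont {α β : Type*} [Preorder α] [Preorder β] (g : α → β) : Prop :=
  ∀ S : Set α, S.Nonempty → DirectedOn (· ≥ ·) S → ∀ x, IsGLB S x → IsGLB (g '' S) (g x)

/-- A map is Scott continuous if it preserves joins of nonempty directed sets. -/
def ScottContOn {α β : Type*} [Preorder α] [Preorder β] (T : Set α) (g : α → β) : Prop :=
  ∀ S ⊆ T, S.Nonempty → DirectedOn (· ≤ ·) S → ∀ x, IsLUB S x → IsLUB (g '' S) (g x)

/-- The covering relation `C_A` of the dcpo presentation `Δ(A)` on `ℱ(A)`. -/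
def covD [Preorder A] (x : FComp A) (U : Set (FComp A)) : Prop :=
  U.Nonempty ∧ DirectedOn (· ≤ ·) U ∧
    ∀ I : Set A, IsIdl I → (∀ x' ∈ U, ∃ a' ∈ I, x' ≤ pf a') → ∃ a ∈ I, x ≤ pf a

/-- `e : A → C` is a canonical extension: a dense and compact lattice completion. -/
def IsCanExt {A C : Type*} [Lattice A] [CompleteLattice C] (e : A → C) : Prop :=
  (∀ a b, e a ≤ e b ↔ a ≤ b) ∧
  (∀ a b, e (a ⊔ b) = e a ⊔ e b) ∧
  (∀ a b, e (a ⊓ b) = e a ⊓ e b) ∧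
  (∀ u v : C, ¬ u ≤ v → ∃ F I : Set A, IsFilt F ∧ IsIdl I ∧
    sInf (e '' F) ≤ u ∧ ¬ sInf (e '' F) ≤ v ∧ v ≤ sSup (e '' I) ∧ ¬ u ≤ sSup (e '' I)) ∧
  (∀ F I : Set A, IsFilt F → IsIdl I → sInf (e '' F) ≤ sSup (e '' I) →
    ∃ b ∈ F, ∃ a ∈ I, b ≤ a)

/-- `f` is an operator: it preserves binary joins in each coordinate. -/
def IsOperator {ι : Type*} [DecidableEq ι] {A : ι → Type*} {B : Type*}
    [∀ i, Lattice (A i)] [Lattice B] (f : (∀ i, A i) → B) : Prop :=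
  ∀ (a : ∀ i, A i) (i : ι) (b : A i),
    f (Function.update a i (a i ⊔ b)) = f a ⊔ f (Function.update a i b)

end Filt

section Terms

/-- Terms over a signature `Ω` with arities `ar`, in `n` variables. -/
inductive OTerm (Ω : Type*) (ar : Ω → ℕ) (n : ℕ) : Type _ where
  | var : Fin n → OTerm Ω ar n
  | op : (ω : Ω) → (Fin (ar ω) → OTerm Ω ar n) → OTerm Ω ar n

/-- Evaluation of a term under an interpretation of the operation symbols. -/
def evalT {Ω : Type*} {ar : Ω → ℕ} {n : ℕ} {A : Type*}
    (interp : ∀ ω, (Fin (ar ω) → A) → A) (v : Fin n → A) : OTerm Ω ar n → A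
  | .var i => v i
  | .op ω args => interp ω (fun j => evalT interp v (args j))

end Terms

/-- The lifting of `f` to C-ideals: `f̄(X₁,…,Xₙ) = ⟨{f(x₁,…,xₙ) | xᵢ ∈ Xᵢ}⟩`. -/
def fbarP {n : ℕ} {P : Fin n → Type*} [∀ i, Preorder (P i)] {P' : Type*} [Preorder P']
    (C : ∀ i, P i → Set (P i) → Prop) (C' : P' → Set P' → Prop)
    (f : (∀ i, P i) → P') (X : ∀ i, CIdl (C i)) : CIdl C' :=
  ⟨genC C' {b | ∃ x : ∀ i, P i, (∀ i, x i ∈ (X i).1) ∧ b = f x}, isCIdeal_genC C' _⟩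

section Aux1
variable {P : Type*} [Preorder P]

lemma genC_min (C : P → Set P → Prop) {S X : Set P} (hX : IsCIdeal C X) (hS : S ⊆ X) :
    genC C S ⊆ X := Set.sInter_subset_of_mem ⟨hX, hS⟩

lemma mem_etaC (C : P → Set P → Prop) (x : P) : x ∈ (etaC C x).1 :=
  subset_genC C {x} rfl

lemma sSup_CIdl_carrier (C : P → Set P → Prop) (T : Set (CIdl C)) :
    (sSup T).1 = genC C (⋃ X ∈ T, (X : CIdl C).1) := by
  apply subset_antisymm
  · have h : sSup T ≤ (⟨genC C (⋃ X ∈ T, (X : CIdl C).1), isCIdeal_genC C _⟩ : CIdl C) := by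
      apply sSup_le
      intro X hX
      refine Set.Subset.trans ?_ (subset_genC C _)
      exact fun a ha => Set.mem_biUnion hX ha
    exact h
  · apply genC_min C (sSup T).2
    intro a ha
    obtain ⟨X, hX, haX⟩ := Set.mem_iUnion₂.mp ha
    exact le_sSup hX haX

lemma etaC_mem_OverC (C : P → Set P → Prop) (x : P) : etaC C x ∈ OverC C :=
  Set.mem_sInter.mpr fun _ hY => hY.1 x

lemma sSup_mem_OverC (C : P → Set P → Prop) {S : Set (CIdl C)} (hS : S ⊆ OverC C)
    (hne : S.Nonempty) (hdir : DirectedOn (· ≤ ·) S) : sSup S ∈ OverC C :=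
  Set.mem_sInter.mpr fun Y hY => hY.2 S (hS.trans (Set.sInter_subset_of_mem hY)) hne hdir

lemma OverC_min (C : P → Set P → Prop) {Y : Set (CIdl C)} (h1 : ∀ x, etaC C x ∈ Y)
    (h2 : ∀ S ⊆ Y, S.Nonempty → DirectedOn (· ≤ ·) S → sSup S ∈ Y) : OverC C ⊆ Y :=
  Set.sInter_subset_of_mem ⟨h1, h2⟩

end Aux1

section Aux2
variable {n : ℕ} {P : Fin n → Type*} [∀ i, Preorder (P i)] {P' : Type*} [Preorder P']
  (C : ∀ i, P i → Set (P i) → Prop) (C' : P' → Set P' → Prop)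
  (f : (∀ i, P i) → P')

lemma update_mono' {i0 : Fin n} (X : ∀ i, CIdl (C i)) :
    Monotone (Function.update X i0) := by
  intro Z Z' hZ j
  rcases eq_or_ne j i0 with rfl | hj
  · simpa using hZ
  · simp [Function.update_of_ne hj]

lemma coordIdeal (hf : Monotone f)
    (hstab : ∀ (x : ∀ i, P i) (i : Fin n) (U : Set (P i)), C i (x i) U →
      C' (f x) ((fun y => f (Function.update x i y)) '' U))
    {J : Set P'} (hJ : IsCIdeal C' J) (z : ∀ i, P i) (i : Fin n) :
    IsCIdeal (C i) {w | f (Function.update z i w) ∈ J} := by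
  constructor
  · intro w hw w' hww'
    refine hJ.1 _ hw _ (hf ?_)
    intro j
    rcases eq_or_ne j i with rfl | hj
    · simpa using hww'
    · simp [Function.update_of_ne hj]
  · intro w U hU hsub
    have h := hstab (Function.update z i w) i U (by rwa [Function.update_self])
    refine hJ.2 _ _ h ?_
    rintro b ⟨u, hu, rfl⟩
    simp only [Function.update_idem]
    exact hsub hu

lemma hybrid_mem (hf : Monotone f)
    (hstab : ∀ (x : ∀ i, P i) (i : Fin n) (U : Set (P i)), C i (x i) U →
      C' (f x) ((fun y => f (Function.update x i y)) '' U))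
    {J : Set P'} (hJ : IsCIdeal C' J) (x y : ∀ i, P i)
    (hx : f x ∈ J) (hy : ∀ i, y i ∈ genC (C i) {x i}) : f y ∈ J := by
  have key : ∀ k : ℕ, f (fun i => if i.val < k then y i else x i) ∈ J := by
    intro k
    induction k with
    | zero => simpa using hx
    | succ k ih =>
      by_cases hk : k < n
      · set i0 : Fin n := ⟨k, hk⟩ with hi0
        set z : ∀ i, P i := fun i => if i.val < k then y i else x i with hzdef
        have hz' : (fun i => if i.val < (k+1) then y i else x i)
            = Function.update z i0 (y i0) := by
          funext j
          rcases eq_or_ne j i0 with rfl | hj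
          · simp [hi0]
          · rw [Function.update_of_ne hj, hzdef]
            show (if (j : ℕ) < k + 1 then y j else x j) = if (j : ℕ) < k then y j else x j
            have hjk : j.val ≠ k := fun h => hj (Fin.ext (by simp [h, hi0]))
            by_cases h2 : j.val < k
            · rw [if_pos h2, if_pos (Nat.lt_succ_of_lt h2)]
            · rw [if_neg h2, if_neg (by omega)]
        rw [hz']
        have hZ := coordIdeal C C' f hf hstab hJ z i0
        have hxk : x i0 ∈ {w | f (Function.update z i0 w) ∈ J} := by
          have hzz : Function.update z i0 (x i0) = z := by
            funext j
            rcases eq_or_ne j i0 with rfl | hj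
            · simp [hzdef, hi0]
            · rw [Function.update_of_ne hj]
          show f (Function.update z i0 (x i0)) ∈ J
          rw [hzz]; exact ih
        have := genC_min (C i0) hZ (by simpa using hxk) (hy i0)
        exact this
      · have heq : (fun i : Fin n => if i.val < (k+1) then y i else x i)
            = fun i => if i.val < k then y i else x i := by
          funext i
          rw [if_pos (by omega), if_pos (by omega)]
        rw [heq]; exact ih
  have := key n
  have heq : (fun i : Fin n => if i.val < n then y i else x i) = y := by
    funext i; rw [if_pos i.isLt]
  rwa [heq] at this

lemma sSup_coord (S : Set (∀ i, CIdl (C i))) (i : Fin n) :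
    sSup S i = sSup ((fun X => X i) '' S) := by
  rw [sSup_apply, sSup_image]
  exact le_antisymm (iSup_le fun g => le_iSup₂_of_le g.1 g.2 le_rfl)
    (iSup₂_le fun X hX => le_iSup_of_le ⟨X, hX⟩ le_rfl)

lemma sup_gen (hf : Monotone f)
    (hstab : ∀ (x : ∀ i, P i) (i : Fin n) (U : Set (P i)), C i (x i) U →
      C' (f x) ((fun y => f (Function.update x i y)) '' U))
    {J : Set P'} (hJ : IsCIdeal C' J)
    (S : Set (∀ i, CIdl (C i))) (hne : S.Nonempty) (hdir : DirectedOn (· ≤ ·) S)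
    (hgen : ∀ X ∈ S, ∀ y : ∀ i, P i, (∀ i, y i ∈ (X i).1) → f y ∈ J) :
    ∀ y : ∀ i, P i, (∀ i, y i ∈ ((sSup S) i).1) → f y ∈ J := by
  have key : ∀ k : ℕ, ∀ y : ∀ i, P i,
      (∀ i : Fin n, i.val < k → y i ∈ ((sSup S) i).1) →
      (∃ X ∈ S, ∀ i : Fin n, k ≤ i.val → y i ∈ (X i).1) → f y ∈ J := by
    intro k
    induction k with
    | zero =>
      rintro y _ ⟨X, hXS, hyX⟩
      exact hgen X hXS y (fun i => hyX i (Nat.zero_le _))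
    | succ k ih =>
      rintro y hlt ⟨X, hXS, hge⟩
      by_cases hk : k < n
      · set i0 : Fin n := ⟨k, hk⟩ with hi0
        have hZ := coordIdeal C C' f hf hstab hJ y i0
        have hsub : ((sSup S) i0).1 ⊆ {w | f (Function.update y i0 w) ∈ J} := by
          rw [sSup_coord, sSup_CIdl_carrier]
          apply genC_min _ hZ
          intro w hw
          obtain ⟨Z, ⟨X', hX'S, rfl⟩, hwZ⟩ := Set.mem_iUnion₂.mp hw
          obtain ⟨X'', hX''S, h1, h2⟩ := hdir X hXS X' hX'S
          refine ih (Function.update y i0 w) ?_ ⟨X'', hX''S, ?_⟩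
          · intro i hi
            have hne' : i ≠ i0 := by
              intro h; rw [h, hi0] at hi; simp at hi
            rw [Function.update_of_ne hne']
            exact hlt i (by omega)
          · intro i hi
            rcases eq_or_ne i i0 with rfl | hne'
            · rw [Function.update_self]
              exact h2 i0 hwZ
            · rw [Function.update_of_ne hne']
              have : i.val ≠ k := fun h => hne' (Fin.ext (by simp [h, hi0]))
              exact h1 i (hge i (by omega))
        have h2 : f (Function.update y i0 (y i0)) ∈ J :=
          hsub (hlt i0 (by rw [hi0]; exact Nat.lt_succ_self k))
        rwa [Function.update_eq_self] at h2
      · exact ih y (fun i _ => hlt i (by omega))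
          ⟨X, hXS, fun i hi => absurd i.isLt (by omega)⟩
  intro y hy
  obtain ⟨X, hX⟩ := hne
  exact key n y (fun i _ => hy i) ⟨X, hX, fun i hi => absurd i.isLt (by omega)⟩

lemma fbar_mono : Monotone (fbarP C C' f) := by
  intro X Y hXY
  show (fbarP C C' f X).1 ⊆ (fbarP C C' f Y).1
  apply genC_min C' (isCIdeal_genC C' _)
  rintro b ⟨y, hy, rfl⟩
  exact subset_genC C' _ ⟨y, fun i => hXY i (hy i), rfl⟩

lemma fbar_eta (hf : Monotone f)
    (hstab : ∀ (x : ∀ i, P i) (i : Fin n) (U : Set (P i)), C i (x i) U →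
      C' (f x) ((fun y => f (Function.update x i y)) '' U))
    (x : ∀ i, P i) :
    fbarP C C' f (fun i => etaC (C i) (x i)) = etaC C' (f x) := by
  apply Subtype.ext
  apply subset_antisymm
  · apply genC_min C' (isCIdeal_genC C' _)
    rintro b ⟨y, hy, rfl⟩
    exact hybrid_mem C C' f hf hstab (isCIdeal_genC C' {f x}) x y (subset_genC C' _ rfl) hy
  · apply genC_min C' (isCIdeal_genC C' _)
    rintro b rfl
    exact subset_genC C' _ ⟨x, fun i => mem_etaC _ _, rfl⟩

lemma fbar_sSup (hf : Monotone f)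
    (hstab : ∀ (x : ∀ i, P i) (i : Fin n) (U : Set (P i)), C i (x i) U →
      C' (f x) ((fun y => f (Function.update x i y)) '' U))
    (S : Set (∀ i, CIdl (C i))) (hne : S.Nonempty) (hdir : DirectedOn (· ≤ ·) S) :
    fbarP C C' f (sSup S) = sSup (fbarP C C' f '' S) := by
  apply le_antisymm
  · show (fbarP C C' f (sSup S)).1 ⊆ (sSup (fbarP C C' f '' S)).1
    apply genC_min C' (sSup (fbarP C C' f '' S)).2
    rintro b ⟨y, hy, rfl⟩
    refine sup_gen C C' f hf hstab (sSup (fbarP C C' f '' S)).2 S hne hdir ?_ y hy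
    intro X hX y' hy'
    have hle : fbarP C C' f X ≤ sSup (fbarP C C' f '' S) :=
      le_sSup (Set.mem_image_of_mem _ hX)
    exact hle (subset_genC C' _ ⟨y', hy', rfl⟩)
  · apply sSup_le
    rintro _ ⟨X, hX, rfl⟩
    exact fbar_mono C C' f (le_sSup hX)

lemma sSup_update (X : ∀ i, CIdl (C i)) (k : Fin n) (T : Set (CIdl (C k)))
    (hne : T.Nonempty) :
    sSup ((fun Z => Function.update X k Z) '' T) = Function.update X k (sSup T) := by
  apply le_antisymm
  · apply sSup_le
    rintro _ ⟨Z, hZ, rfl⟩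
    exact update_mono' C X (le_sSup hZ)
  · intro j
    rw [sSup_apply]
    by_cases hj : j = k
    · subst hj
      rw [Function.update_self]
      apply sSup_le
      intro Z hZ
      refine le_iSup_of_le ⟨Function.update X j Z, ⟨Z, hZ, rfl⟩⟩ (le_of_eq (by simp))
    · rw [Function.update_of_ne hj]
      obtain ⟨Z0, hZ0⟩ := hne
      refine le_iSup_of_le ⟨Function.update X k Z0, ⟨Z0, hZ0, rfl⟩⟩
        (le_of_eq (Function.update_of_ne hj _ _).symm)

end Aux2

/-- the lifting `f̄` of an order-preserving cover-stable map between dcpo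
presentations is a well-defined Scott-continuous extension of `f` to the free dcpos, and it
is the unique such extension. -/
theorem statement3 {n : ℕ} {P : Fin n → Type*} [∀ i, Preorder (P i)] {P' : Type*}
    [Preorder P']
    (C : ∀ i, P i → Set (P i) → Prop) (C' : P' → Set P' → Prop)
    (hC : ∀ i x U, C i x U → U.Nonempty ∧ DirectedOn (· ≤ ·) U)
    (hC' : ∀ x U, C' x U → U.Nonempty ∧ DirectedOn (· ≤ ·) U)
    (f : (∀ i, P i) → P') (hf : Monotone f)
    (hstab : ∀ (x : ∀ i, P i) (i : Fin n) (U : Set (P i)), C i (x i) U →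
      C' (f x) ((fun y => f (Function.update x i y)) '' U)) :
    (∀ X : ∀ i, CIdl (C i), (∀ i, X i ∈ OverC (C i)) → fbarP C C' f X ∈ OverC C') ∧
    Monotone (fbarP C C' f) ∧
    (∀ x : ∀ i, P i, fbarP C C' f (fun i => etaC (C i) (x i)) = etaC C' (f x)) ∧
    (∀ S : Set (∀ i, CIdl (C i)), (∀ Y ∈ S, ∀ i, Y i ∈ OverC (C i)) →
      S.Nonempty → DirectedOn (· ≤ ·) S →
      fbarP C C' f (sSup S) = sSup (fbarP C C' f '' S)) ∧
    (∀ g : (∀ i, CIdl (C i)) → CIdl C',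
      (∀ x : ∀ i, P i, g (fun i => etaC (C i) (x i)) = etaC C' (f x)) →
      (∀ S : Set (∀ i, CIdl (C i)), (∀ Y ∈ S, ∀ i, Y i ∈ OverC (C i)) →
        S.Nonempty → DirectedOn (· ≤ ·) S → g (sSup S) = sSup (g '' S)) →
      ∀ X, (∀ i, X i ∈ OverC (C i)) → g X = fbarP C C' f X) := by
  refine ⟨?_, fbar_mono C C' f, fbar_eta C C' f hf hstab,
    fun S _ hne hdir => fbar_sSup C C' f hf hstab S hne hdir, ?_⟩
  · -- conjunct 1
    have key : ∀ k : ℕ, ∀ X : ∀ i, CIdl (C i), (∀ i, X i ∈ OverC (C i)) →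
        (∀ i : Fin n, k ≤ i.val → ∃ x, X i = etaC (C i) x) →
        fbarP C C' f X ∈ OverC C' := by
      intro k
      induction k with
      | zero =>
        intro X _ hEta
        choose x hx using fun i => hEta i (Nat.zero_le _)
        have hXeq : X = fun i => etaC (C i) (x i) := funext hx
        rw [hXeq, fbar_eta C C' f hf hstab]
        exact etaC_mem_OverC C' _
      | succ k ih =>
        intro X hX hEta
        by_cases hk : k < n
        · set i0 : Fin n := ⟨k, hk⟩ with hi0
          have hY : OverC (C i0) ⊆ {Z | Z ∈ OverC (C i0) ∧
              fbarP C C' f (Function.update X i0 Z) ∈ OverC C'} := by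
            apply OverC_min
            · intro z
              refine ⟨etaC_mem_OverC _ _, ?_⟩
              apply ih
              · intro i
                rcases eq_or_ne i i0 with rfl | hne'
                · rw [Function.update_self]; exact etaC_mem_OverC _ _
                · rw [Function.update_of_ne hne']; exact hX i
              · intro i hi
                rcases eq_or_ne i i0 with rfl | hne'
                · rw [Function.update_self]; exact ⟨z, rfl⟩
                · rw [Function.update_of_ne hne']
                  have : i.val ≠ k := fun h => hne' (Fin.ext (by simp [h, hi0]))
                  exact hEta i (by omega)
            · intro T hT hTne hTdir
              refine ⟨sSup_mem_OverC _ (fun Z hZ => (hT hZ).1) hTne hTdir, ?_⟩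
              rw [← sSup_update C X i0 T hTne,
                fbar_sSup C C' f hf hstab _ (hTne.image _) ?_]
              · apply sSup_mem_OverC C'
                · rintro _ ⟨_, ⟨Z, hZ, rfl⟩, rfl⟩
                  exact (hT hZ).2
                · exact (hTne.image _).image _
                · rintro _ ⟨_, ⟨a, ha, rfl⟩, rfl⟩ _ ⟨_, ⟨b, hb, rfl⟩, rfl⟩
                  obtain ⟨c, hc, hac, hbc⟩ := hTdir a ha b hb
                  exact ⟨_, ⟨_, ⟨c, hc, rfl⟩, rfl⟩,
                    fbar_mono C C' f (update_mono' C X hac),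
                    fbar_mono C C' f (update_mono' C X hbc)⟩
              · rintro _ ⟨a, ha, rfl⟩ _ ⟨b, hb, rfl⟩
                obtain ⟨c, hc, hac, hbc⟩ := hTdir a ha b hb
                exact ⟨_, ⟨c, hc, rfl⟩, update_mono' C X hac, update_mono' C X hbc⟩
          have := hY (hX i0)
          simp only [Set.mem_setOf_eq, Function.update_eq_self] at this
          exact this.2
        · exact ih X hX (fun i hi => absurd i.isLt (by omega))
    intro X hX
    exact key n X hX (fun i hi => absurd i.isLt (by omega))
  · -- uniqueness
    intro g hgeta hgsup
    have key : ∀ k : ℕ, ∀ X : ∀ i, CIdl (C i), (∀ i, X i ∈ OverC (C i)) →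
        (∀ i : Fin n, k ≤ i.val → ∃ x, X i = etaC (C i) x) →
        g X = fbarP C C' f X := by
      intro k
      induction k with
      | zero =>
        intro X _ hEta
        choose x hx using fun i => hEta i (Nat.zero_le _)
        have hXeq : X = fun i => etaC (C i) (x i) := funext hx
        rw [hXeq, fbar_eta C C' f hf hstab, hgeta]
      | succ k ih =>
        intro X hX hEta
        by_cases hk : k < n
        · set i0 : Fin n := ⟨k, hk⟩ with hi0
          have hY : OverC (C i0) ⊆ {Z | Z ∈ OverC (C i0) ∧
              g (Function.update X i0 Z) = fbarP C C' f (Function.update X i0 Z)} := by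
            apply OverC_min
            · intro z
              refine ⟨etaC_mem_OverC _ _, ?_⟩
              apply ih
              · intro i
                rcases eq_or_ne i i0 with rfl | hne'
                · rw [Function.update_self]; exact etaC_mem_OverC _ _
                · rw [Function.update_of_ne hne']; exact hX i
              · intro i hi
                rcases eq_or_ne i i0 with rfl | hne'
                · rw [Function.update_self]; exact ⟨z, rfl⟩
                · rw [Function.update_of_ne hne']
                  have : i.val ≠ k := fun h => hne' (Fin.ext (by simp [h, hi0]))
                  exact hEta i (by omega)
            · intro T hT hTne hTdir
              have hmemO : ∀ Z ∈ T, ∀ i, Function.update X i0 Z i ∈ OverC (C i) := by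
                intro Z hZ i
                rcases eq_or_ne i i0 with rfl | hne'
                · rw [Function.update_self]; exact (hT hZ).1
                · rw [Function.update_of_ne hne']; exact hX i
              have hdir' : DirectedOn (· ≤ ·) ((fun Z => Function.update X i0 Z) '' T) := by
                rintro _ ⟨a, ha, rfl⟩ _ ⟨b, hb, rfl⟩
                obtain ⟨c, hc, hac, hbc⟩ := hTdir a ha b hb
                exact ⟨_, ⟨c, hc, rfl⟩, update_mono' C X hac, update_mono' C X hbc⟩
              refine ⟨sSup_mem_OverC _ (fun Z hZ => (hT hZ).1) hTne hTdir, ?_⟩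
              rw [← sSup_update C X i0 T hTne]
              rw [hgsup _ (by rintro _ ⟨Z, hZ, rfl⟩; exact hmemO Z hZ)
                (hTne.image _) hdir']
              rw [fbar_sSup C C' f hf hstab _ (hTne.image _) hdir']
              congr 1
              rw [Set.image_image, Set.image_image]
              exact Set.image_congr (fun Z hZ => (hT hZ).2)
          have := hY (hX i0)
          simp only [Set.mem_setOf_eq, Function.update_eq_self] at this
          exact this.2
        · exact ih X hX (fun i hi => absurd i.isLt (by omega))
    intro X hX
    exact key n X hX (fun i hi => absurd i.isLt (by omega))
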